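/- Let p, q ∈ A be projections, x ∈ S_p(X) and y ∈ S_q(X), and suppose x·⟨x,z⟩ = y·⟨y,z⟩ for all z ∈ X (i.e. the rank-one projections θ_{x,x} and θ_{y,y} coincide). Then v := ⟨x,y⟩ satisfies vv* = p and v*v = q; in particular p and q are Murray–von Neumann equivalent. -/
import Mathlib


/-- A right Hilbert C*-module structure on `X` over the C*-algebra `A`:
`X` is a right `A`-module with an `A`-valued inner product satisfying
`⟨x,y⟩* = ⟨y,x⟩`, `⟨x, y·a⟩ = ⟨x,y⟩·a`, `⟨x,x⟩ ≥ 0`, and the norm of `X`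
satisfies `‖x‖² = ‖⟨x,x⟩‖` (so completeness of `X` is completeness for this norm). -/
structure CStarModuleStr (A X : Type*) [NormedRing A] [StarRing A] [CStarRing A]
    [PartialOrder A] [StarOrderedRing A] [NormedAddCommGroup X] where
  smul : X → A → X
  inner : X → X → A
  add_smul : ∀ x y a, smul (x + y) a = smul x a + smul y a
  smul_add : ∀ x a b, smul x (a + b) = smul x a + smul x b
  smul_mul : ∀ x a b, smul (smul x a) b = smul x (a * b)
  inner_add_left : ∀ x y z, inner (x + y) z = inner x z + inner y z
  inner_add_right : ∀ x y z, inner x (y + z) = inner x y + inner x z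
  star_inner : ∀ x y, star (inner x y) = inner y x
  inner_smul_right : ∀ x y a, inner x (smul y a) = inner x y * a
  inner_self_nonneg : ∀ x, 0 ≤ inner x x
  norm_sq_eq : ∀ x, ‖x‖ ^ 2 = ‖inner x x‖

variable {A X : Type*} [NormedRing A] [StarRing A] [CStarRing A]
  [PartialOrder A] [StarOrderedRing A] [CompleteSpace A]
  [NormedAddCommGroup X] [CompleteSpace X]

/-- **Proposition 2.6 (claim in part 2).** If `x ∈ S_p(X)` and `y ∈ S_q(X)` have
`θ_{x,x} = θ_{y,y}` (i.e. `x·⟨x,z⟩ = y·⟨y,z⟩` for all `z`), then `v := ⟨x,y⟩`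
satisfies `vv* = p` and `v*v = q`; in particular `p` and `q` are Murray–von Neumann
equivalent. -/
theorem theta_eq_implies_mvn_equiv (M : CStarModuleStr A X) (p q : A)
    (hp : p * p = p) (hps : star p = p) (hq : q * q = q) (hqs : star q = q)
    (x y : X) (hx : M.inner x x = p) (hy : M.inner y y = q)
    (h : ∀ z : X, M.smul x (M.inner x z) = M.smul y (M.inner y z)) :
    M.inner x y * star (M.inner x y) = p ∧ star (M.inner x y) * M.inner x y = q := by
  have hsv : star (M.inner x y) = M.inner y x := M.star_inner x y
  constructor
  · have h1 := congrArg (M.inner x) (h x)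
    rw [M.inner_smul_right, M.inner_smul_right, hx, hp] at h1
    rw [hsv, ← h1]
  · have h2 := congrArg (M.inner y) (h y)
    rw [M.inner_smul_right, M.inner_smul_right, hy, hq] at h2
    rw [hsv, h2]
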